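/- Let R be a Noetherian commutative ring and let I be a pure ideal of R. Then the global dimension of R⋈I equals the global dimension of R. -/

import Mathlib

universe u

open scoped TensorProduct

namespace Paper

/-- The amalgamated duplication `R ⋈ I`, as the subring
`{(r, s) : s - r ∈ I} = {(r, r+i) : r ∈ R, i ∈ I}` of `R × R`. -/
def dup (R : Type*) [CommRing R] (I : Ideal R) : Subring (R × R) where
  carrier := {p | p.2 - p.1 ∈ I}
  zero_mem' := by simp
  one_mem' := by simp
  add_mem' := by
    intro a b ha hb
    simp only [Set.mem_setOf_eq, Prod.fst_add, Prod.snd_add] at *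
    have h : a.2 + b.2 - (a.1 + b.1) = (a.2 - a.1) + (b.2 - b.1) := by ring
    rw [h]; exact I.add_mem ha hb
  neg_mem' := by
    intro a ha
    simp only [Set.mem_setOf_eq, Prod.fst_neg, Prod.snd_neg] at *
    have h : -a.2 - -a.1 = -(a.2 - a.1) := by ring
    rw [h]; exact I.neg_mem ha
  mul_mem' := by
    intro a b ha hb
    simp only [Set.mem_setOf_eq, Prod.fst_mul, Prod.snd_mul] at *
    have h : a.2 * b.2 - a.1 * b.1 = a.2 * (b.2 - b.1) + (a.2 - a.1) * b.1 := by ring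
    rw [h]; exact I.add_mem (I.mul_mem_left _ hb) (I.mul_mem_right _ ha)

lemma mem_dup {R : Type*} [CommRing R] {I : Ideal R} {p : R × R} :
    p ∈ dup R I ↔ p.2 - p.1 ∈ I := Iff.rfl

/-- The diagonal embedding `R → R ⋈ I`, `r ↦ (r, r)`. -/
def diag (R : Type*) [CommRing R] (I : Ideal R) : R →+* dup R I where
  toFun r := ⟨(r, r), mem_dup.mpr (by simp)⟩
  map_one' := rfl
  map_mul' _ _ := rfl
  map_zero' := rfl
  map_add' _ _ := rfl

noncomputable instance dupAlgebra (R : Type*) [CommRing R] (I : Ideal R) :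
    Algebra R (dup R I) := (diag R I).toAlgebra

/-- `pdLE R n M` means that `M` has projective dimension `≤ n` as an `R`-module. -/
def pdLE (R : Type u) [CommRing R] : ℕ → (M : Type u) → [AddCommGroup M] → [Module R M] → Prop
  | 0, M, _, _ => Module.Projective R M
  | (n + 1), M, _, _ => pdLE R n (LinearMap.ker (Finsupp.linearCombination R (id : M → M)))

/-- `fdLE R n M` means that `M` has flat dimension `≤ n` as an `R`-module. -/
def fdLE (R : Type u) [CommRing R] : ℕ → (M : Type u) → [AddCommGroup M] → [Module R M] → Prop
  | 0, M, _, _ => Module.Flat R M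
  | (n + 1), M, _, _ => fdLE R n (LinearMap.ker (Finsupp.linearCombination R (id : M → M)))

/-- The projective dimension of an `R`-module `M`, as an element of `ℕ∞`. -/
noncomputable def projDim (R : Type u) [CommRing R] (M : Type u) [AddCommGroup M]
    [Module R M] : ℕ∞ :=
  sInf {n : ℕ∞ | ∃ k : ℕ, (k : ℕ∞) = n ∧ pdLE R k M}

/-- The flat dimension of an `R`-module `M`, as an element of `ℕ∞`. -/
noncomputable def flatDim (R : Type u) [CommRing R] (M : Type u) [AddCommGroup M]
    [Module R M] : ℕ∞ :=
  sInf {n : ℕ∞ | ∃ k : ℕ, (k : ℕ∞) = n ∧ fdLE R k M}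

/-- The global dimension of `R`: the supremum of projective dimensions of `R`-modules. -/
noncomputable def gldim (R : Type u) [CommRing R] : ℕ∞ :=
  ⨆ (M : Type u) (_ : AddCommGroup M) (_ : Module R M), projDim R M

/-- The weak global dimension of `R`: the supremum of flat dimensions of `R`-modules. -/
noncomputable def wdim (R : Type u) [CommRing R] : ℕ∞ :=
  ⨆ (M : Type u) (_ : AddCommGroup M) (_ : Module R M), flatDim R M


/-- The first projection `R ⋈ I → R`, `(r, r+i) ↦ r`. -/
def dupFst (R : Type*) [CommRing R] (I : Ideal R) : dup R I →+* R :=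
  (RingHom.fst R R).comp (dup R I).subtype

/-- The second projection `R ⋈ I → R`, `(r, r+i) ↦ r + i`. -/
def dupSnd (R : Type*) [CommRing R] (I : Ideal R) : dup R I →+* R :=
  (RingHom.snd R R).comp (dup R I).subtype

/-- A commutative ring is von Neumann regular if every `a` satisfies `a = a²b` for some `b`. -/
def IsVNRegular (R : Type*) [CommRing R] : Prop := ∀ a : R, ∃ b : R, a = a * a * b

/-- A commutative ring is semihereditary if every finitely generated ideal is projective. -/
def IsSemihereditary (R : Type*) [CommRing R] : Prop :=
  ∀ J : Ideal R, J.FG → Module.Projective R J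

/-- A commutative ring is coherent if every finitely generated ideal is finitely presented. -/
def IsCoherentRing (R : Type*) [CommRing R] : Prop :=
  ∀ J : Ideal R, J.FG → Module.FinitePresentation R J

/-- The content of a polynomial: the ideal generated by its coefficients. -/
def contentIdeal {R : Type*} [CommRing R] (f : Polynomial R) : Ideal R :=
  Ideal.span (Set.range f.coeff)

/-- A commutative ring is Gaussian if `c(fg) = c(f)c(g)` for all polynomials `f, g`. -/
def IsGaussianRing (R : Type*) [CommRing R] : Prop :=
  ∀ f g : Polynomial R, contentIdeal (f * g) = contentIdeal f * contentIdeal g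

/-- `R` is a `(1,d)`-ring if every finitely presented (i.e. `1`-presented) `R`-module has
projective dimension at most `d`. -/
def IsOneDRing (R : Type u) [CommRing R] (d : ℕ) : Prop :=
  ∀ (M : Type u) [AddCommGroup M] [Module R M],
    Module.FinitePresentation R M → projDim R M ≤ (d : ℕ∞)

/-- The trace ideal of an `R`-module `M`: the sum of the images of all `R`-linear maps
`M → R`. -/
def traceIdeal (R : Type*) [CommRing R] (M : Type*) [AddCommGroup M] [Module R M] : Ideal R :=
  ⨆ f : M →ₗ[R] R, LinearMap.range f


-- ===== auxiliary machinery =====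
section basic
variable {R : Type u} [CommRing R]

lemma pdLE_zero (M : Type u) [AddCommGroup M] [Module R M] :
    pdLE R 0 M ↔ Module.Projective R M := Iff.rfl

lemma pdLE_succ_iff (n : ℕ) (M : Type u) [AddCommGroup M] [Module R M] :
    pdLE R (n+1) M ↔ pdLE R n (LinearMap.ker (Finsupp.linearCombination R (id : M → M))) :=
  Iff.rfl

end basic

/-- Transport of finsupps along a ring equiv and a bijection of index types. -/
noncomputable def finsuppCongr {A B : Type u} [CommRing A] [CommRing B] (φ : A ≃+* B)
    {M N : Type u} (f : M ≃ N) : (M →₀ A) ≃+ (N →₀ B) :=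
  (Finsupp.domCongr f).trans (Finsupp.mapRange.addEquiv φ.toAddEquiv)

lemma finsuppCongr_apply {A B : Type u} [CommRing A] [CommRing B] (φ : A ≃+* B)
    {M N : Type u} (f : M ≃ N) (g : M →₀ A) (n : N) :
    finsuppCongr φ f g n = φ (g (f.symm n)) := by
  simp [finsuppCongr, Finsupp.mapRange.addEquiv, Finsupp.domCongr]

lemma finsuppCongr_single {A B : Type u} [CommRing A] [CommRing B] (φ : A ≃+* B)
    {M N : Type u} (f : M ≃ N) (m : M) (a : A) :
    finsuppCongr φ f (Finsupp.single m a) = Finsupp.single (f m) (φ a) := by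
  ext n
  rw [finsuppCongr_apply]
  by_cases h : n = f m
  · subst h; simp
  · rw [Finsupp.single_eq_of_ne'
        (fun hc => h (by rw [hc, Equiv.apply_symm_apply])),
      Finsupp.single_eq_of_ne' (Ne.symm h), map_zero]

lemma finsuppCongr_smul {A B : Type u} [CommRing A] [CommRing B] (φ : A ≃+* B)
    {M N : Type u} (f : M ≃ N) (a : A) (g : M →₀ A) :
    finsuppCongr φ f (a • g) = φ a • finsuppCongr φ f g := by
  ext n
  simp [finsuppCongr_apply]

lemma finsuppCongr_lc {A B : Type u} [CommRing A] [CommRing B] (φ : A ≃+* B)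
    {M N : Type u} [AddCommGroup M] [Module A M] [AddCommGroup N] [Module B N]
    (f : M ≃+ N) (hf : ∀ (a : A) (m : M), f (a • m) = φ a • f m) (g : M →₀ A) :
    Finsupp.linearCombination B (id : N → N) (finsuppCongr φ f.toEquiv g)
      = f (Finsupp.linearCombination A (id : M → M) g) := by
  induction g using Finsupp.induction_linear with
  | zero => simp
  | add g₁ g₂ h₁ h₂ => rw [map_add, map_add, h₁, h₂, map_add, map_add]
  | single m a =>
      rw [finsuppCongr_single]
      simp [hf]


namespace Paper2
open Paper

variable {A B : Type u} [CommRing A] [CommRing B]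

lemma symm_hf (φ : A ≃+* B) {M N : Type u} [AddCommGroup M] [Module A M]
    [AddCommGroup N] [Module B N] (f : M ≃+ N)
    (hf : ∀ (a : A) (m : M), f (a • m) = φ a • f m) :
    ∀ (b : B) (n : N), f.symm (b • n) = φ.symm b • f.symm n := by
  intro b n
  apply f.injective
  rw [AddEquiv.apply_symm_apply, hf, RingEquiv.apply_symm_apply, AddEquiv.apply_symm_apply]

lemma projective_congr (φ : A ≃+* B) {M N : Type u} [AddCommGroup M] [Module A M]
    [AddCommGroup N] [Module B N] (f : M ≃+ N)
    (hf : ∀ (a : A) (m : M), f (a • m) = φ a • f m)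
    (hM : Module.Projective A M) : Module.Projective B N := by
  obtain ⟨s, hs⟩ := Module.projective_def.mp hM
  refine Module.projective_def.mpr ⟨⟨⟨fun t => finsuppCongr φ f.toEquiv (s (f.symm t)), ?_⟩, ?_⟩, ?_⟩
  · intro t₁ t₂; simp only [map_add]
  · intro b t
    simp only [RingHom.id_apply]
    rw [symm_hf φ f hf, map_smul, finsuppCongr_smul, RingEquiv.apply_symm_apply]
  · intro t
    show Finsupp.linearCombination B id (finsuppCongr φ f.toEquiv (s (f.symm t))) = t
    rw [finsuppCongr_lc φ f hf, hs, AddEquiv.apply_symm_apply]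

theorem pdLE_congr (φ : A ≃+* B) :
    ∀ (n : ℕ) {M N : Type u} [AddCommGroup M] [Module A M] [AddCommGroup N] [Module B N]
      (f : M ≃+ N), (∀ (a : A) (m : M), f (a • m) = φ a • f m) →
      (pdLE A n M ↔ pdLE B n N)
  | 0, M, N, _, _, _, _, f, hf =>
      ⟨fun h => projective_congr φ f hf h,
       fun h => projective_congr φ.symm f.symm (symm_hf φ f hf) h⟩
  | (n+1), M, N, _, _, _, _, f, hf => by
      rw [pdLE_succ_iff, pdLE_succ_iff]
      set K := LinearMap.ker (Finsupp.linearCombination A (id : M → M)) with hK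
      set K' := LinearMap.ker (Finsupp.linearCombination B (id : N → N)) with hK'
      have hmem : ∀ x : M →₀ A, x ∈ K → finsuppCongr φ f.toEquiv x ∈ K' := by
        intro x hx
        have : Finsupp.linearCombination A (id : M → M) x = 0 := hx
        simp only [K', LinearMap.mem_ker, finsuppCongr_lc φ f hf, this, map_zero]
      have hmem' : ∀ y : N →₀ B, y ∈ K' → (finsuppCongr φ f.toEquiv).symm y ∈ K := by
        intro y hy
        have h2 : Finsupp.linearCombination B (id : N → N)
            (finsuppCongr φ f.toEquiv ((finsuppCongr φ f.toEquiv).symm y)) = 0 := by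
          rw [AddEquiv.apply_symm_apply]; exact hy
        rw [finsuppCongr_lc φ f hf] at h2
        exact f.injective (by rw [h2, map_zero])
      refine pdLE_congr φ n
        ⟨⟨fun x => ⟨finsuppCongr φ f.toEquiv x.1, hmem x.1 x.2⟩,
          fun y => ⟨(finsuppCongr φ f.toEquiv).symm y.1, hmem' y.1 y.2⟩, ?_, ?_⟩, ?_⟩ ?_
      · intro x; apply Subtype.ext; exact (finsuppCongr φ f.toEquiv).symm_apply_apply x.1
      · intro y; apply Subtype.ext; exact (finsuppCongr φ f.toEquiv).apply_symm_apply y.1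
      · intro x y; apply Subtype.ext; exact map_add _ x.1 y.1
      · intro a x; apply Subtype.ext; exact finsuppCongr_smul φ f.toEquiv a x.1

/-- pdLE is invariant under linear equivalence. -/
theorem pdLE_of_linearEquiv {R : Type u} [CommRing R] {M N : Type u}
    [AddCommGroup M] [Module R M] [AddCommGroup N] [Module R N]
    (e : M ≃ₗ[R] N) (n : ℕ) : pdLE R n M ↔ pdLE R n N :=
  pdLE_congr (RingEquiv.refl R) n e.toAddEquiv (fun a m => e.map_smul a m)

end Paper2

namespace Paper3
open Paper Paper2

variable {R : Type u} [CommRing R]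

/-- Schanuel's lemma. -/
theorem schanuel {M P Q : Type u} [AddCommGroup M] [Module R M]
    [AddCommGroup P] [Module R P] [AddCommGroup Q] [Module R Q]
    [Module.Projective R P] [Module.Projective R Q]
    (p : P →ₗ[R] M) (q : Q →ₗ[R] M) (hp : Function.Surjective p) (hq : Function.Surjective q) :
    Nonempty ((LinearMap.ker p × Q) ≃ₗ[R] (LinearMap.ker q × P)) := by
  obtain ⟨σ, hσ⟩ := Module.projective_lifting_property p q hp
  obtain ⟨τ, hτ⟩ := Module.projective_lifting_property q p hq
  have hσ' : ∀ b, p (σ b) = q b := fun b => LinearMap.ext_iff.mp hσ b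
  have hτ' : ∀ a, q (τ a) = p a := fun a => LinearMap.ext_iff.mp hτ a
  refine ⟨⟨⟨⟨fun x => (⟨x.2 - τ (x.1.1 + σ x.2), ?_⟩, x.1.1 + σ x.2), ?_⟩, ?_⟩,
    fun y => (⟨y.2 - σ (y.1.1 + τ y.2), ?_⟩, y.1.1 + τ y.2), ?_, ?_⟩⟩
  · have hk : p x.1.1 = 0 := x.1.2
    simp only [LinearMap.mem_ker, map_sub, hτ', map_add, hσ', hk, zero_add, sub_self]
  · intro x y
    apply Prod.ext
    · apply Subtype.ext
      simp only [Prod.fst_add, Prod.snd_add, Submodule.coe_add, map_add]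
      abel
    · simp only [Prod.fst_add, Prod.snd_add, Submodule.coe_add, map_add]
      abel
  · intro c x
    apply Prod.ext
    · apply Subtype.ext
      simp only [Prod.smul_fst, Prod.smul_snd, SetLike.val_smul, RingHom.id_apply,
        smul_sub, smul_add, map_smul, map_add]
    · simp only [Prod.smul_fst, Prod.smul_snd, SetLike.val_smul, map_smul, smul_add,
        RingHom.id_apply]
  · have hk : q y.1.1 = 0 := y.1.2
    simp only [LinearMap.mem_ker, map_sub, hσ', map_add, hτ', hk, zero_add, sub_self]
  · intro x
    apply Prod.ext
    · apply Subtype.ext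
      show x.1.1 + σ x.2 - σ (x.2 - τ (x.1.1 + σ x.2) + τ (x.1.1 + σ x.2)) = x.1.1
      rw [sub_add_cancel]; abel
    · show x.2 - τ (x.1.1 + σ x.2) + τ (x.1.1 + σ x.2) = x.2
      rw [sub_add_cancel]
  · intro y
    apply Prod.ext
    · apply Subtype.ext
      show y.1.1 + τ y.2 - τ (y.2 - σ (y.1.1 + τ y.2) + σ (y.1.1 + τ y.2)) = y.1.1
      rw [sub_add_cancel]; abel
    · show y.2 - σ (y.1.1 + τ y.2) + σ (y.1.1 + τ y.2) = y.2
      rw [sub_add_cancel]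

lemma lc_surjective (M : Type u) [AddCommGroup M] [Module R M] :
    Function.Surjective (Finsupp.linearCombination R (id : M → M)) :=
  fun m => ⟨Finsupp.single m 1, by simp⟩

end Paper3


namespace Paper4
open Paper Paper2 Paper3

variable {R : Type u} [CommRing R]

/-- Adding a projective direct summand does not change `pdLE`. -/
theorem pdLE_prod_proj :
    ∀ (n : ℕ) (M P : Type u) [AddCommGroup M] [Module R M] [AddCommGroup P] [Module R P],
      Module.Projective R P → (pdLE R n (M × P) ↔ pdLE R n M)
  | 0, M, P, _, _, _, _, hP => by
      rw [pdLE_zero, pdLE_zero]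
      exact ⟨fun h => Module.Projective.of_split (LinearMap.inl R M P) (LinearMap.fst R M P)
          (by ext; simp),
        fun h => inferInstance⟩
  | (n+1), M, P, _, _, _, _, hP => by
      rw [pdLE_succ_iff, pdLE_succ_iff]
      -- two presentations of M × P
      set p := Finsupp.linearCombination R (id : (M × P) → (M × P)) with hp
      set q := (Finsupp.linearCombination R (id : M → M)).prodMap (LinearMap.id (M := P)) with hq
      have hpsurj : Function.Surjective p := lc_surjective _
      have hqsurj : Function.Surjective q := by
        intro x
        obtain ⟨u, hu⟩ := lc_surjective (R := R) M x.1
        exact ⟨(u, x.2), by simp [hq, hu]⟩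
      obtain ⟨e⟩ := schanuel p q hpsurj hqsurj
      -- ker q ≃ ker lc_M
      have hker : ∀ x : (M →₀ R) × P, x ∈ LinearMap.ker q ↔
          (Finsupp.linearCombination R (id : M → M) x.1 = 0 ∧ x.2 = 0) := by
        intro x
        rw [LinearMap.mem_ker, hq]
        exact ⟨fun h => ⟨congrArg Prod.fst h, congrArg Prod.snd h⟩,
          fun h => Prod.ext (by simpa using h.1) (by simpa using h.2)⟩
      let eker : LinearMap.ker q ≃ₗ[R]
          LinearMap.ker (Finsupp.linearCombination R (id : M → M)) :=
        { toFun := fun x => ⟨x.1.1, ((hker x.1).mp x.2).1⟩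
          invFun := fun k => ⟨(k.1, 0), (hker _).mpr ⟨k.2, rfl⟩⟩
          map_add' := fun x y => rfl
          map_smul' := fun c x => rfl
          left_inv := fun x => Subtype.ext (Prod.ext rfl (((hker x.1).mp x.2).2.symm))
          right_inv := fun k => rfl }
      have h1 := pdLE_prod_proj n
        (LinearMap.ker p : Type u) ((M →₀ R) × P)
        (inferInstance : Module.Projective R ((M →₀ R) × P))
      have h2 := pdLE_prod_proj n
        (LinearMap.ker (Finsupp.linearCombination R (id : M → M)) : Type u) ((M × P) →₀ R)
        (inferInstance : Module.Projective R ((M × P) →₀ R))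
      rw [← h1, ← h2]
      exact pdLE_of_linearEquiv (e.trans (eker.prodCongr (LinearEquiv.refl R _))) n

/-- `pdLE` for a product of modules. -/
theorem pdLE_prod :
    ∀ (n : ℕ) (M N : Type u) [AddCommGroup M] [Module R M] [AddCommGroup N] [Module R N],
      pdLE R n (M × N) ↔ (pdLE R n M ∧ pdLE R n N)
  | 0, M, N, _, _, _, _ => by
      rw [pdLE_zero, pdLE_zero, pdLE_zero]
      exact ⟨fun h => ⟨Module.Projective.of_split (LinearMap.inl R M N) (LinearMap.fst R M N)
            (by ext; simp),
          Module.Projective.of_split (LinearMap.inr R M N) (LinearMap.snd R M N) (by ext; simp)⟩,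
        fun h => have := h.1; have := h.2; inferInstance⟩
  | (n+1), M, N, _, _, _, _ => by
      rw [pdLE_succ_iff, pdLE_succ_iff, pdLE_succ_iff]
      set p := Finsupp.linearCombination R (id : (M × N) → (M × N)) with hp
      set q := (Finsupp.linearCombination R (id : M → M)).prodMap
        (Finsupp.linearCombination R (id : N → N)) with hq
      have hpsurj : Function.Surjective p := lc_surjective _
      have hqsurj : Function.Surjective q := by
        intro x
        obtain ⟨u, hu⟩ := lc_surjective (R := R) M x.1
        obtain ⟨v, hv⟩ := lc_surjective (R := R) N x.2
        exact ⟨(u, v), by simp [hq, hu, hv]⟩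
      obtain ⟨e⟩ := schanuel p q hpsurj hqsurj
      have hker : ∀ x : (M →₀ R) × (N →₀ R), x ∈ LinearMap.ker q ↔
          (Finsupp.linearCombination R (id : M → M) x.1 = 0 ∧
           Finsupp.linearCombination R (id : N → N) x.2 = 0) := by
        intro x
        rw [LinearMap.mem_ker, hq]
        exact ⟨fun h => ⟨congrArg Prod.fst h, congrArg Prod.snd h⟩,
          fun h => Prod.ext (by simpa using h.1) (by simpa using h.2)⟩
      let eker : LinearMap.ker q ≃ₗ[R]
          (LinearMap.ker (Finsupp.linearCombination R (id : M → M)) ×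
           LinearMap.ker (Finsupp.linearCombination R (id : N → N))) :=
        { toFun := fun x => (⟨x.1.1, ((hker x.1).mp x.2).1⟩, ⟨x.1.2, ((hker x.1).mp x.2).2⟩)
          invFun := fun k => ⟨(k.1.1, k.2.1), (hker _).mpr ⟨k.1.2, k.2.2⟩⟩
          map_add' := fun x y => rfl
          map_smul' := fun c x => rfl
          left_inv := fun x => Subtype.ext rfl
          right_inv := fun k => rfl }
      rw [← pdLE_prod_proj n (LinearMap.ker p : Type u) ((M →₀ R) × (N →₀ R))
        (inferInstance : Module.Projective R ((M →₀ R) × (N →₀ R)))]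
      rw [show (pdLE R n (LinearMap.ker (Finsupp.linearCombination R (id : M → M))) ∧
          pdLE R n (LinearMap.ker (Finsupp.linearCombination R (id : N → N)))) ↔ _
        from (pdLE_prod n _ _).symm]
      rw [← pdLE_prod_proj n
        ((LinearMap.ker (Finsupp.linearCombination R (id : M → M)) ×
          LinearMap.ker (Finsupp.linearCombination R (id : N → N))) : Type u) ((M × N) →₀ R)
        (inferInstance : Module.Projective R ((M × N) →₀ R))]
      exact pdLE_of_linearEquiv (e.trans (eker.prodCongr (LinearEquiv.refl R _))) n

/-- `pdLE` is monotone in `n`. -/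
theorem pdLE_succ_of_pdLE :
    ∀ (n : ℕ) (M : Type u) [AddCommGroup M] [Module R M], pdLE R n M → pdLE R (n+1) M
  | 0, M, _, _ => by
      intro h
      rw [pdLE_zero] at h
      rw [pdLE_succ_iff, pdLE_zero]
      obtain ⟨s, hs⟩ := Module.projective_def.mp h
      set lc := Finsupp.linearCombination R (id : M → M) with hlc
      refine Module.Projective.of_split (M := M →₀ R) (LinearMap.ker lc).subtype
        (LinearMap.codRestrict (LinearMap.ker lc) (LinearMap.id - s ∘ₗ lc) ?_) ?_
      · intro x
        simp [lc, hs (lc x)]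
      · ext x
        simp [hs, x.2, (LinearMap.mem_ker.mp x.2 : lc x.1 = 0)]
  | (n+1), M, _, _ => by
      intro h
      rw [pdLE_succ_iff] at h ⊢
      exact pdLE_succ_of_pdLE n _ h

theorem pdLE_mono {m n : ℕ} (h : m ≤ n) (M : Type u) [AddCommGroup M] [Module R M]
    (hm : pdLE R m M) : pdLE R n M := by
  induction h with
  | refl => exact hm
  | step _ ih => exact pdLE_succ_of_pdLE _ _ ih

end Paper4

namespace Paper5
open Paper Paper2 Paper3 Paper4

variable {A B : Type u} [CommRing A] [CommRing B]

section lcfacts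
variable (M : Type u) [AddCommGroup M] [Module A M] [Module (A × B) M]

lemma lc_fst_eq (h : ∀ (a : A) (b : B) (m : M), (a, b) • m = a • m) (g : M →₀ (A × B)) :
    Finsupp.linearCombination A (id : M → M) (g.mapRange Prod.fst rfl)
      = Finsupp.linearCombination (A × B) (id : M → M) g := by
  induction g using Finsupp.induction_linear with
  | zero => simp
  | add g₁ g₂ h₁ h₂ => rw [Finsupp.mapRange_add (by simp), map_add, map_add, h₁, h₂]
  | single m s =>
      rw [Finsupp.mapRange_single]
      simp only [Finsupp.linearCombination_single, id_eq]
      rw [← h s.1 s.2 m]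

lemma lc_inl_eq (h : ∀ (a : A) (b : B) (m : M), (a, b) • m = a • m) (g : M →₀ A) :
    Finsupp.linearCombination (A × B) (id : M → M) (g.mapRange (fun a => (a, (0:B))) rfl)
      = Finsupp.linearCombination A (id : M → M) g := by
  induction g using Finsupp.induction_linear with
  | zero => simp
  | add g₁ g₂ h₁ h₂ => rw [Finsupp.mapRange_add (by simp [Prod.ext_iff]), map_add, map_add, h₁, h₂]
  | single m a =>
      rw [Finsupp.mapRange_single]
      simp only [Finsupp.linearCombination_single, id_eq]
      rw [h a 0 m]

lemma lc_inr_eq (h : ∀ (a : A) (b : B) (m : M), (a, b) • m = a • m) (g : M →₀ B) :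
    Finsupp.linearCombination (A × B) (id : M → M) (g.mapRange (fun b => ((0 : A), b)) rfl)
      = 0 := by
  induction g using Finsupp.induction_linear with
  | zero => simp
  | add g₁ g₂ h₁ h₂ => rw [Finsupp.mapRange_add (by simp [Prod.ext_iff]), map_add, h₁, h₂, add_zero]
  | single m b =>
      rw [Finsupp.mapRange_single]
      simp only [Finsupp.linearCombination_single, id_eq]
      rw [h 0 b m, zero_smul]

end lcfacts

/-- `M →₀ B` is a projective `A × B`-module (action through the second projection). -/
lemma projective_finsupp_snd (M : Type u) :
    letI : Module (A × B) (M →₀ B) := Module.compHom _ (RingHom.snd A B)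
    Module.Projective (A × B) (M →₀ B) := by
  letI : Module (A × B) (M →₀ B) := Module.compHom _ (RingHom.snd A B)
  refine Module.Projective.of_split (M := M →₀ (A × B))
    ⟨⟨fun g => g.mapRange (fun b => ((0 : A), b)) rfl, ?_⟩, ?_⟩
    ⟨⟨fun g => g.mapRange Prod.snd rfl, ?_⟩, ?_⟩ ?_
  · intro x y; ext m <;> simp
  · intro s x
    show Finsupp.mapRange (fun b => ((0:A), b)) rfl (s.2 • x)
      = s • Finsupp.mapRange (fun b => ((0:A), b)) rfl x
    refine Finsupp.ext fun m => ?_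
    simp [Prod.ext_iff]
  · intro x y; ext m; simp
  · intro s x
    show Finsupp.mapRange Prod.snd rfl (s • x) = s.2 • Finsupp.mapRange Prod.snd rfl x
    refine Finsupp.ext fun m => ?_
    simp
  · ext x m; simp

theorem pdLE_fst :
    ∀ (n : ℕ) (M : Type u) [AddCommGroup M] [Module A M] [Module (A × B) M],
      (∀ (a : A) (b : B) (m : M), (a, b) • m = a • m) →
      (pdLE (A × B) n M ↔ pdLE A n M)
  | 0, M, _, _, _, h => by
      rw [pdLE_zero, pdLE_zero]
      constructor
      · intro hS
        obtain ⟨s, hs⟩ := Module.projective_def.mp hS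
        refine Module.projective_def.mpr ⟨⟨⟨fun t => (s t).mapRange Prod.fst rfl, ?_⟩, ?_⟩, ?_⟩
        · intro x y; ext m; simp
        · intro a t
          show (s (a • t)).mapRange Prod.fst rfl = a • ((s t).mapRange Prod.fst rfl)
          rw [show a • t = ((a, (0:B)) : A × B) • t from (h a 0 t).symm, map_smul]
          ext m
          show ((a, (0:B)) * (s t) m).1 = a * ((s t) m).1
          simp
        · intro t
          show Finsupp.linearCombination A (id : M → M) ((s t).mapRange Prod.fst rfl) = t
          rw [lc_fst_eq M h]
          exact hs t
      · intro hA
        obtain ⟨s, hs⟩ := Module.projective_def.mp hA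
        refine Module.projective_def.mpr ⟨⟨⟨fun t => (s t).mapRange (fun a => (a, (0:B))) rfl,
          ?_⟩, ?_⟩, ?_⟩
        · intro x y; ext m <;> simp
        · intro sc t
          show (s (sc • t)).mapRange (fun a => (a, (0:B))) rfl
            = sc • ((s t).mapRange (fun a => (a, (0:B))) rfl)
          rw [show (sc • t : M) = sc.1 • t from h sc.1 sc.2 t, map_smul]
          ext m
          · show sc.1 * ((s t) m) = (sc * ((s t) m, (0:B))).1
            simp
          · show (0 : B) = (sc * ((s t) m, (0:B))).2
            simp
        · intro t
          show Finsupp.linearCombination (A × B) (id : M → M)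
            ((s t).mapRange (fun a => (a, (0:B))) rfl) = t
          rw [lc_inl_eq M h]
          exact hs t
  | (n+1), M, _, _, _, h => by
      rw [pdLE_succ_iff, pdLE_succ_iff]
      set KS := LinearMap.ker (Finsupp.linearCombination (A × B) (id : M → M)) with hKS
      set KA := LinearMap.ker (Finsupp.linearCombination A (id : M → M)) with hKA
      letI instKA : Module (A × B) KA := Module.compHom _ (RingHom.fst A B)
      letI instB : Module (A × B) (M →₀ B) := Module.compHom _ (RingHom.snd A B)
      have hcompat : ∀ (a : A) (b : B) (x : KA), ((a, b) • x : KA) = a • x := fun a b x => rfl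
      have memKA : ∀ x : M →₀ (A × B), x ∈ KS → x.mapRange Prod.fst rfl ∈ KA := by
        intro x hx
        rw [hKA, LinearMap.mem_ker, lc_fst_eq M h]
        exact hx
      have memKS : ∀ (k : M →₀ A) (g : M →₀ B), k ∈ KA →
          k.mapRange (fun a => (a, (0:B))) rfl + g.mapRange (fun b => ((0:A), b)) rfl ∈ KS := by
        intro k g hk
        rw [hKS, LinearMap.mem_ker, map_add, lc_inl_eq M h, lc_inr_eq M h, add_zero]
        exact hk
      have key := pdLE_congr (RingEquiv.refl (A × B)) n
        (M := KS) (N := (KA × (M →₀ B) : Type u))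
        ⟨⟨fun x => (⟨x.1.mapRange Prod.fst rfl, memKA x.1 x.2⟩, x.1.mapRange Prod.snd rfl),
          fun y => ⟨(y.1 : M →₀ A).mapRange (fun a => (a, (0:B))) rfl
            + y.2.mapRange (fun b => ((0:A), b)) rfl, memKS _ _ y.1.2⟩, ?_, ?_⟩, ?_⟩ ?_
      · rw [key]
        have hBproj : Module.Projective (A × B) (M →₀ B) := projective_finsupp_snd M
        rw [pdLE_prod_proj n (KA : Type u) (M →₀ B) hBproj]
        exact pdLE_fst n (KA : Type u) hcompat
      · intro x
        apply Subtype.ext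
        refine Finsupp.ext fun m => ?_
        show (Finsupp.mapRange (fun a => (a, (0:B))) rfl
            (Finsupp.mapRange Prod.fst rfl (x.1 : M →₀ (A × B)))
          + Finsupp.mapRange (fun b => ((0:A), b)) rfl
            (Finsupp.mapRange Prod.snd rfl (x.1 : M →₀ (A × B)))) m = (x.1 : M →₀ (A × B)) m
        simp [Prod.ext_iff]
      · intro y
        apply Prod.ext
        · apply Subtype.ext
          ext m
          show ((y.1 : M →₀ A) m, (0:B)).1 + ((0:A), y.2 m).1 = (y.1 : M →₀ A) m
          simp
        · ext m
          show ((y.1 : M →₀ A) m, (0:B)).2 + ((0:A), y.2 m).2 = y.2 m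
          simp
      · intro x y
        apply Prod.ext
        · apply Subtype.ext; ext m; simp
        · ext m; simp
      · intro s x
        apply Prod.ext
        · apply Subtype.ext
          ext m
          show ((s • x.1) m).1 = s.1 * ((x.1 : M →₀ (A × B)) m).1
          show (s * (x.1 : M →₀ (A × B)) m).1 = _
          simp
        · ext m
          show ((s • x.1) m).2 = s.2 * ((x.1 : M →₀ (A × B)) m).2
          show (s * (x.1 : M →₀ (A × B)) m).2 = _
          simp

end Paper5

namespace Paper6
open Paper Paper2 Paper3 Paper4 Paper5

variable {A B : Type u} [CommRing A] [CommRing B]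

theorem pdLE_snd :
    ∀ (n : ℕ) (M : Type u) [AddCommGroup M] [Module B M] [Module (A × B) M],
      (∀ (a : A) (b : B) (m : M), (a, b) • m = b • m) →
      (pdLE (A × B) n M ↔ pdLE B n M) := by
  intro n M iM jM iS h
  letI : Module (B × A) M := Module.compHom M (RingEquiv.prodComm (R := B) (S := A)).toRingHom
  have h1 : pdLE (A × B) n M ↔ pdLE (B × A) n M := by
    refine pdLE_congr (RingEquiv.prodComm (R := A) (S := B)) n (AddEquiv.refl M) ?_
    intro s m
    show s • m = (RingEquiv.prodComm (R := B) (S := A)) ((s.2, s.1)) • m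
    rfl
  rw [h1]
  refine pdLE_fst n M ?_
  intro b a m
  show ((a, b) : A × B) • m = b • m
  exact h a b m

section projdim
variable {R : Type u} [CommRing R]

lemma projDim_le_iff (M : Type u) [AddCommGroup M] [Module R M] (n : ℕ) :
    projDim R M ≤ (n : ℕ∞) ↔ pdLE R n M := by
  constructor
  · intro hle
    set S := {m : ℕ∞ | ∃ k : ℕ, (k : ℕ∞) = m ∧ pdLE R k M} with hS
    by_cases hne : S.Nonempty
    · set T := {k : ℕ | pdLE R k M} with hT
      have hTne : T.Nonempty := by
        obtain ⟨m, k, hk, hp⟩ := hne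
        exact ⟨k, hp⟩
      have hmem : pdLE R (sInf T) M := Nat.sInf_mem hTne
      have hle2 : ((sInf T : ℕ) : ℕ∞) ≤ projDim R M := by
        apply le_sInf
        rintro m ⟨k, rfl, hp⟩
        exact_mod_cast Nat.sInf_le hp
      have : ((sInf T : ℕ) : ℕ∞) ≤ (n : ℕ∞) := le_trans hle2 hle
      exact pdLE_mono (by exact_mod_cast this) M hmem
    · exfalso
      rw [Set.not_nonempty_iff_eq_empty] at hne
      rw [projDim, ← hS, hne, sInf_empty] at hle
      exact absurd hle (by simp)
  · intro hp
    exact sInf_le ⟨n, rfl, hp⟩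

lemma projDim_eq_of_iff {R' : Type u} [CommRing R'] (M N : Type u) [AddCommGroup M] [Module R M]
    [AddCommGroup N] [Module R' N] (h : ∀ k : ℕ, pdLE R k M ↔ pdLE R' k N) :
    projDim R M = projDim R' N := by
  unfold projDim
  congr 1
  ext x
  constructor
  · rintro ⟨k, rfl, hp⟩; exact ⟨k, rfl, (h k).mp hp⟩
  · rintro ⟨k, rfl, hp⟩; exact ⟨k, rfl, (h k).mpr hp⟩

lemma le_gldim (M : Type u) [iM : AddCommGroup M] [jM : Module R M] :
    projDim R M ≤ gldim R :=
  le_iSup_of_le M (le_iSup_of_le iM (le_iSup_of_le jM le_rfl))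

lemma gldim_le {c : ℕ∞} (h : ∀ (M : Type u) [AddCommGroup M] [Module R M], projDim R M ≤ c) :
    gldim R ≤ c :=
  iSup_le fun M => iSup_le fun iM => iSup_le fun jM => h M

end projdim

theorem gldim_le_of_ringEquiv (φ : A ≃+* B) : gldim A ≤ gldim B := by
  apply gldim_le
  intro M iM jM
  letI jB : Module B M := Module.compHom M φ.symm.toRingHom
  have h : ∀ k : ℕ, pdLE A k M ↔ pdLE B k M := by
    intro k
    refine pdLE_congr φ k (AddEquiv.refl M) ?_
    intro a m
    show a • m = φ.symm (φ a) • m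
    rw [RingEquiv.symm_apply_apply]
  rw [projDim_eq_of_iff M M h]
  exact le_gldim M

theorem gldim_congr (φ : A ≃+* B) : gldim A = gldim B :=
  le_antisymm (gldim_le_of_ringEquiv φ) (gldim_le_of_ringEquiv φ.symm)

end Paper6

namespace Paper7
open Paper Paper2 Paper3 Paper4 Paper5 Paper6

variable {A B : Type u} [CommRing A] [CommRing B]

theorem gldim_A_le_prod : gldim A ≤ gldim (A × B) := by
  apply gldim_le
  intro M iM jM
  letI : Module (A × B) M := Module.compHom M (RingHom.fst A B)
  have h : ∀ k : ℕ, pdLE A k M ↔ pdLE (A × B) k M := by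
    intro k
    exact (pdLE_fst k M (fun a b m => rfl)).symm
  rw [projDim_eq_of_iff M M h]
  exact le_gldim M

theorem gldim_B_le_prod : gldim B ≤ gldim (A × B) := by
  apply gldim_le
  intro M iM jM
  letI : Module (A × B) M := Module.compHom M (RingHom.snd A B)
  have h : ∀ k : ℕ, pdLE B k M ↔ pdLE (A × B) k M := by
    intro k
    exact (pdLE_snd k M (fun a b m => rfl)).symm
  rw [projDim_eq_of_iff M M h]
  exact le_gldim M

theorem gldim_prod : gldim (A × B) = gldim A ⊔ gldim B := by
  apply le_antisymm
  · apply gldim_le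
    intro M iM jM
    set e₁ : A × B := (1, 0) with he₁
    set e₂ : A × B := (0, 1) with he₂
    set M₁ : Submodule (A × B) M := LinearMap.ker (LinearMap.lsmul (A × B) M e₂) with hM₁
    set M₂ : Submodule (A × B) M := LinearMap.ker (LinearMap.lsmul (A × B) M e₁) with hM₂
    have hmem₁ : ∀ m : M, m ∈ M₁ ↔ e₂ • m = 0 := fun m => by
      rw [hM₁, LinearMap.mem_ker, LinearMap.lsmul_apply]
    have hmem₂ : ∀ m : M, m ∈ M₂ ↔ e₁ • m = 0 := fun m => by
      rw [hM₂, LinearMap.mem_ker, LinearMap.lsmul_apply]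
    -- A-module structure on M₁
    letI sA : SMul A M₁ := ⟨fun a x => ⟨((a, (0:B)) : A × B) • (x : M), by
      rw [hmem₁, smul_comm, (hmem₁ x.1).mp x.2, smul_zero]⟩⟩
    have sA_def : ∀ (a : A) (x : M₁), ((a • x : M₁) : M) = ((a, (0:B)) : A × B) • (x : M) :=
      fun a x => rfl
    have one_smul₁ : ∀ x : M₁, ((1 : A) • x : M₁) = x := by
      intro x
      apply Subtype.ext
      rw [sA_def]
      have h1 : (((1:A), (0:B)) : A × B) = 1 - e₂ := by rw [he₂]; ext <;> simp
      rw [h1, sub_smul, one_smul, (hmem₁ x.1).mp x.2, sub_zero]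
    letI modA : Module A M₁ := Module.ofMinimalAxioms
      (fun a x y => Subtype.ext (by rw [sA_def]; exact smul_add _ _ _))
      (fun a b x => Subtype.ext (by
        rw [sA_def, show (((a+b : A), (0:B)) : A × B) = (a, (0:B)) + (b, (0:B)) by ext <;> simp,
          add_smul]; rfl))
      (fun a b x => Subtype.ext (by
        rw [sA_def, show (((a*b : A), (0:B)) : A × B) = (a, (0:B)) * (b, (0:B)) by ext <;> simp,
          mul_smul]; rfl))
      one_smul₁
    -- B-module structure on M₂
    letI sB : SMul B M₂ := ⟨fun b x => ⟨(((0:A), b) : A × B) • (x : M), by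
      rw [hmem₂, smul_comm, (hmem₂ x.1).mp x.2, smul_zero]⟩⟩
    have sB_def : ∀ (b : B) (x : M₂), ((b • x : M₂) : M) = (((0:A), b) : A × B) • (x : M) :=
      fun b x => rfl
    have one_smul₂ : ∀ x : M₂, ((1 : B) • x : M₂) = x := by
      intro x
      apply Subtype.ext
      rw [sB_def]
      have h1 : (((0:A), (1:B)) : A × B) = 1 - e₁ := by rw [he₁]; ext <;> simp
      rw [h1, sub_smul, one_smul, (hmem₂ x.1).mp x.2, sub_zero]
    letI modB : Module B M₂ := Module.ofMinimalAxioms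
      (fun a x y => Subtype.ext (by rw [sB_def]; exact smul_add _ _ _))
      (fun a b x => Subtype.ext (by
        rw [sB_def, show ((((0:A), a+b)) : A × B) = ((0:A), a) + ((0:A), b) by ext <;> simp,
          add_smul]; rfl))
      (fun a b x => Subtype.ext (by
        rw [sB_def, show ((((0:A), a*b)) : A × B) = ((0:A), a) * ((0:A), b) by ext <;> simp,
          mul_smul]; rfl))
      one_smul₂
    -- compatibility
    have hcomp₁ : ∀ (a : A) (b : B) (x : M₁), ((a, b) • x : M₁) = a • x := by
      intro a b x
      apply Subtype.ext
      rw [sA_def]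
      show ((a, b) : A × B) • (x : M) = _
      have h1 : ((a, b) : A × B) = (a, (0:B)) + ((0:A), b) * e₂ := by rw [he₂]; ext <;> simp
      rw [h1, add_smul, mul_smul, (hmem₁ x.1).mp x.2, smul_zero, add_zero]
    have hcomp₂ : ∀ (a : A) (b : B) (x : M₂), ((a, b) • x : M₂) = b • x := by
      intro a b x
      apply Subtype.ext
      rw [sB_def]
      show ((a, b) : A × B) • (x : M) = _
      have h1 : ((a, b) : A × B) = ((0:A), b) + (a, (0:B)) * e₁ := by rw [he₁]; ext <;> simp
      rw [h1, add_smul, mul_smul, (hmem₂ x.1).mp x.2, smul_zero, add_zero]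
    -- the decomposition M ≃ M₁ × M₂
    have he₁₂ : e₁ + e₂ = 1 := by rw [he₁, he₂]; ext <;> simp
    let eqv : M ≃ₗ[A × B] (↥M₁ × ↥M₂) :=
      { toFun := fun m => (⟨e₁ • m, by
            rw [hmem₁, ← mul_smul, show e₂ * e₁ = 0 by rw [he₁, he₂]; ext <;> simp, zero_smul]⟩,
          ⟨e₂ • m, by
            rw [hmem₂, ← mul_smul, show e₁ * e₂ = 0 by rw [he₁, he₂]; ext <;> simp, zero_smul]⟩)
        map_add' := fun x y => by
          apply Prod.ext <;> exact Subtype.ext (smul_add _ _ _)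
        map_smul' := fun c m => by
          apply Prod.ext <;> · apply Subtype.ext; simp [smul_comm c]
        invFun := fun x => (x.1 : M) + (x.2 : M)
        left_inv := fun m => by
          show e₁ • m + e₂ • m = m
          rw [← add_smul, he₁₂, one_smul]
        right_inv := fun x => by
          apply Prod.ext
          · apply Subtype.ext
            show e₁ • ((x.1 : M) + (x.2 : M)) = (x.1 : M)
            rw [smul_add, (hmem₂ x.2.1).mp x.2.2, add_zero]
            have h1 : (x.1 : M) = (e₁ + e₂) • (x.1 : M) := by rw [he₁₂, one_smul]
            rw [add_smul, (hmem₁ x.1.1).mp x.1.2, add_zero] at h1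
            exact h1.symm
          · apply Subtype.ext
            show e₂ • ((x.1 : M) + (x.2 : M)) = (x.2 : M)
            rw [smul_add, (hmem₁ x.1.1).mp x.1.2, zero_add]
            have h1 : (x.2 : M) = (e₁ + e₂) • (x.2 : M) := by rw [he₁₂, one_smul]
            rw [add_smul, (hmem₂ x.2.1).mp x.2.2, zero_add] at h1
            exact h1.symm }
    have hiff : ∀ k : ℕ, pdLE (A × B) k M ↔ (pdLE A k (M₁ : Type u) ∧ pdLE B k (M₂ : Type u)) := by
      intro k
      rw [pdLE_of_linearEquiv eqv k, pdLE_prod k (↥M₁) (↥M₂),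
        pdLE_fst k (↥M₁) hcomp₁, pdLE_snd k (↥M₂) hcomp₂]
    refine le_trans ?_ (sup_le_sup (le_gldim (R := A) (↥M₁)) (le_gldim (R := B) (↥M₂)))
    rcases eq_or_ne (projDim A (↥M₁) ⊔ projDim B (↥M₂)) ⊤ with htop | hne
    · rw [htop]; exact le_top
    · obtain ⟨n, hn0⟩ := WithTop.ne_top_iff_exists.mp hne
      have hn : ((n : ℕ) : ℕ∞) = projDim A (↥M₁) ⊔ projDim B (↥M₂) := by exact_mod_cast hn0
      rw [← hn, projDim_le_iff, hiff n]
      exact ⟨(projDim_le_iff _ n).mp (le_sup_left.trans hn.ge),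
        (projDim_le_iff _ n).mp (le_sup_right.trans hn.ge)⟩
  · exact sup_le gldim_A_le_prod gldim_B_le_prod

end Paper7

namespace Paper8
open Paper Paper6

variable {R : Type u} [CommRing R]

/-- In a Noetherian ring, a pure ideal is generated by an idempotent:
we extract the complementary idempotent data. -/
theorem exists_idem (I : Ideal R) [IsNoetherianRing R] (hpure : Module.Flat R (R ⧸ I)) :
    ∃ f : R, (1 - f) ∈ I ∧ (∀ x ∈ I, x * f = 0) := by
  have hfp : Module.FinitePresentation R (R ⧸ I) := Module.finitePresentation_of_finite R _
  have hproj : Module.Projective R (R ⧸ I) :=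
    Module.freeLocus_eq_univ_iff.mp Module.freeLocus_eq_univ
  obtain ⟨s, hs⟩ := Module.projective_lifting_property (Submodule.mkQ I)
    (LinearMap.id : (R ⧸ I) →ₗ[R] (R ⧸ I)) (Submodule.mkQ_surjective I)
  have hs' : ∀ x : R ⧸ I, Submodule.mkQ I (s x) = x := fun x => LinearMap.ext_iff.mp hs x
  refine ⟨s 1, ?_, ?_⟩
  · rw [← Submodule.Quotient.mk_eq_zero I]
    have : Submodule.mkQ I ((1 : R) - s 1) = 0 := by
      rw [map_sub, hs']
      show Submodule.mkQ I 1 - (1 : R ⧸ I) = 0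
      rw [show Submodule.mkQ I 1 = (1 : R ⧸ I) from rfl, sub_self]
    exact this
  · intro x hx
    have h1 : x • (1 : R ⧸ I) = 0 := by
      show x • Submodule.mkQ I 1 = 0
      rw [← map_smul, smul_eq_mul, mul_one, Submodule.mkQ_apply,
        Submodule.Quotient.mk_eq_zero I]
      exact hx
    calc x * s 1 = x • s 1 := (smul_eq_mul x (s 1)).symm
    _ = s (x • (1 : R ⧸ I)) := (map_smul s x 1).symm
    _ = 0 := by rw [h1, map_zero]

theorem main_ring_isos (I : Ideal R) (f : R) (hf : (1 - f) ∈ I) (hfI : ∀ x ∈ I, x * f = 0) :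
    Nonempty ((dup R I) ≃+* R × (R ⧸ Ideal.span {f})) ∧
    Nonempty (R ≃+* (R ⧸ I) × (R ⧸ Ideal.span {f})) := by
  set e : R := 1 - f with he_def
  set J : Ideal R := Ideal.span {f} with hJ
  have hef : e + f = 1 := by ring
  have hff : f * f = f := by
    have h2 : (1 - f) * f = 0 := hfI e hf
    rw [sub_mul, one_mul] at h2
    exact (sub_eq_zero.mp h2).symm
  have hinter : ∀ x : R, x ∈ I → x ∈ J → x = 0 := by
    intro x hxI hxJ
    obtain ⟨c, hc⟩ := Ideal.mem_span_singleton'.mp hxJ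
    have h1 : x * f = 0 := hfI x hxI
    rw [← hc] at h1 ⊢
    rw [mul_assoc, hff] at h1
    exact h1
  constructor
  · -- dup R I ≃+* R × R/J
    refine ⟨RingEquiv.ofBijective
      ({ toFun := fun x => ((x : R × R).1, Ideal.Quotient.mk J (x : R × R).2)
         map_one' := rfl
         map_mul' := fun x y => rfl
         map_zero' := rfl
         map_add' := fun x y => rfl } : dup R I →+* R × (R ⧸ J)) ⟨?_, ?_⟩⟩
    · intro x y hxy
      have h1 := congrArg Prod.fst hxy
      have h2 := congrArg Prod.snd hxy
      change (x : R × R).1 = (y : R × R).1 at h1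
      change Ideal.Quotient.mk J (x : R × R).2 = Ideal.Quotient.mk J (y : R × R).2 at h2
      rw [Ideal.Quotient.mk_eq_mk_iff_sub_mem] at h2
      have hI2 : (x : R × R).2 - (y : R × R).2 ∈ I := by
        have hx := x.2
        have hy := y.2
        rw [mem_dup] at hx hy
        have := I.sub_mem hx hy
        have h3 : (x:R×R).2 - (x:R×R).1 - ((y:R×R).2 - (y:R×R).1)
            = (x:R×R).2 - (y:R×R).2 - ((x:R×R).1 - (y:R×R).1) := by ring
        rw [h3, h1, sub_self, sub_zero] at this
        exact this
      have h0 := hinter _ hI2 h2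
      apply Subtype.ext
      exact Prod.ext h1 (sub_eq_zero.mp h0)
    · rintro ⟨r, q⟩
      obtain ⟨t, rfl⟩ := Ideal.Quotient.mk_surjective q
      refine ⟨⟨(r, r * f + t * e), ?_⟩, ?_⟩
      · rw [mem_dup]
        show r * f + t * e - r ∈ I
        have h3 : r * f + t * e - r = (t - r) * e := by rw [he_def]; ring
        rw [h3]
        exact I.mul_mem_left _ hf
      · show ((r, Ideal.Quotient.mk J (r * f + t * e)) : R × R ⧸ J) = (r, Ideal.Quotient.mk J t)
        have hmk : Ideal.Quotient.mk J (r * f + t * e) = Ideal.Quotient.mk J t := by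
          rw [Ideal.Quotient.mk_eq_mk_iff_sub_mem]
          have h3 : r * f + t * e - t = (r - t) * f := by rw [he_def]; ring
          rw [h3]
          exact J.mul_mem_left _ (Ideal.subset_span rfl)
        rw [hmk]
  · -- R ≃+* R/I × R/J
    have hco : IsCoprime I J := by
      rw [Ideal.isCoprime_iff_exists]
      exact ⟨e, hf, f, Ideal.subset_span rfl, hef⟩
    have hbot : I ⊓ J = ⊥ := by
      apply le_antisymm _ bot_le
      intro x hx
      rw [Submodule.mem_bot]
      exact hinter x hx.1 hx.2
    exact ⟨((RingEquiv.quotientBot R).symm.trans (Ideal.quotEquivOfEq hbot.symm)).trans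
      (Ideal.quotientInfEquivQuotientProd I J hco)⟩

end Paper8



/-- If `I` is a pure ideal of a Noetherian ring `R`, then the global dimension of `R ⋈ I`
equals the global dimension of `R`. -/
theorem gldim_dup_eq_of_pure (R : Type u) [CommRing R] [IsNoetherianRing R] (I : Ideal R)
    (hpure : Module.Flat R (R ⧸ I)) :
    gldim (dup R I) = gldim R := by
  obtain ⟨f, hf, hfI⟩ := Paper8.exists_idem I hpure
  obtain ⟨⟨E1⟩, ⟨E2⟩⟩ := Paper8.main_ring_isos I f hf hfI
  have h1 : gldim (dup R I) = gldim R ⊔ gldim (R ⧸ Ideal.span {f}) := by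
    rw [Paper6.gldim_congr E1, Paper7.gldim_prod]
  have h2 : gldim R = gldim (R ⧸ I) ⊔ gldim (R ⧸ Ideal.span {f}) := by
    rw [Paper6.gldim_congr E2, Paper7.gldim_prod]
  rw [h1]
  apply sup_eq_left.mpr
  rw [h2]
  exact le_sup_right

end Paper
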